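/- Let i₀ be a vertex of a triangulated region embedded by two geodesic embeddings φ, φ' into discs of radii r and 1 respectively, with conformal factor u (l' = u * l), and suppose both metrics satisfy the uniformly nondegenerate condition with constant ε. If there is an edge i₀j₀ with l'_{i₀j₀} ≥ (1 − |z'_{i₀}|²) sin ε, where z'_{i₀} = φ'(i₀) ∈ D_{1}, u_{i₀} = min u over vertices in the unit disc, |z_{i₀}| ≤ 1/2, l_{i₀j₀} ≤ 2r, and r = sin³ε/4, then e^{u^h_{i₀}} ≥ 1, where u^h_{i₀} = u_{i₀} + log((1−|z_{i₀}|²)/(1−|z'_{i₀}|²)). -/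

import Mathlib

open Real EuclideanGeometry

private lemma sin_le_sin_aux {ε θ : ℝ} (hε : 0 < ε) (h1 : ε ≤ θ) (h2 : θ ≤ π - ε) :
    Real.sin ε ≤ Real.sin θ := by
  have hε2 : ε ≤ π / 2 := by linarith
  have hpi := Real.pi_pos
  rcases le_or_gt θ (π / 2) with h | h
  · refine Real.strictMonoOn_sin.monotoneOn ?_ ?_ h1
    · exact Set.mem_Icc.mpr ⟨by linarith, hε2⟩
    · exact Set.mem_Icc.mpr ⟨by linarith, h⟩
  · rw [show Real.sin θ = Real.sin (π - θ) from (Real.sin_pi_sub θ).symm]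
    refine Real.strictMonoOn_sin.monotoneOn ?_ ?_ (by linarith)
    · exact Set.mem_Icc.mpr ⟨by linarith, hε2⟩
    · exact Set.mem_Icc.mpr ⟨by linarith, by linarith⟩

/-- Law of sines, product form, for a triangle `A B C` in `ℂ`. -/
private lemma sin_mul_dist_eq (A B C : ℂ) (hAB : A ≠ B) :
    Real.sin (∠ B A C) * dist A C = Real.sin (∠ A B C) * dist B C := by
  have hx : B - A ≠ 0 := sub_ne_zero.2 (Ne.symm hAB)
  have h1 := InnerProductGeometry.sin_angle_mul_norm_mul_norm (B - A) (C - A)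
  have h2 := InnerProductGeometry.sin_angle_mul_norm_mul_norm (A - B) (C - B)
  have hang1 : ∠ B A C = InnerProductGeometry.angle (B - A) (C - A) := rfl
  have hang2 : ∠ A B C = InnerProductGeometry.angle (A - B) (C - B) := rfl
  have harg : (inner ℝ (A - B) (A - B) * inner ℝ (C - B) (C - B)
      - inner ℝ (A - B) (C - B) * inner ℝ (A - B) (C - B) : ℝ)
      = inner ℝ (B - A) (B - A) * inner ℝ (C - A) (C - A)
      - inner ℝ (B - A) (C - A) * inner ℝ (B - A) (C - A) := by
    have e1 : A - B = -(B - A) := by ring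
    have e2 : C - B = (C - A) - (B - A) := by ring
    rw [e1, e2]
    simp only [inner_neg_left, inner_neg_right, inner_sub_left, inner_sub_right]
    rw [real_inner_comm B A, real_inner_comm C A, real_inner_comm C B]
    ring
  rw [harg, ← h1] at h2
  have hxpos : (0 : ℝ) < ‖B - A‖ := norm_pos_iff.2 hx
  have hd1 : dist A C = ‖C - A‖ := by rw [dist_eq_norm, ← norm_neg]; ring_nf
  have hd2 : dist B C = ‖C - B‖ := by rw [dist_eq_norm, ← norm_neg]; ring_nf
  have hn : ‖A - B‖ = ‖B - A‖ := by rw [← norm_neg]; ring_nf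
  rw [hn] at h2
  rw [hang1, hang2, hd1, hd2]
  refine mul_left_cancel₀ (ne_of_gt hxpos) ?_
  linear_combination -h2

/-- In a triangle with all angles at least `ε`, any side is at least `sin ε`
times any other side. -/
private lemma sin_mul_dist_le (ε : ℝ) (hε0 : 0 < ε) (A B C : ℂ)
    (hAB : A ≠ B) (hAC : A ≠ C)
    (hA : ε ≤ ∠ B A C) (hB : ε ≤ ∠ A B C) (hC : ε ≤ ∠ B C A) :
    Real.sin ε * dist B C ≤ dist A C := by
  have hsum := EuclideanGeometry.angle_add_angle_add_angle_eq_pi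
    (p₁ := A) (p₂ := B) (p₃ := C) hAB.symm
  rw [EuclideanGeometry.angle_comm C A B] at hsum
  have hBle : ∠ A B C ≤ π - ε := by linarith
  have hsinB : Real.sin ε ≤ Real.sin (∠ A B C) := sin_le_sin_aux hε0 hB hBle
  have hls := sin_mul_dist_eq A B C hAB
  calc Real.sin ε * dist B C ≤ Real.sin (∠ A B C) * dist B C :=
        mul_le_mul_of_nonneg_right hsinB dist_nonneg
    _ = Real.sin (∠ B A C) * dist A C := hls.symm
    _ ≤ 1 * dist A C := mul_le_mul_of_nonneg_right (Real.sin_le_one _) dist_nonneg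
    _ = dist A C := one_mul _

/-- interior long-edge estimate, case (2) in the key estimate:
let `i₀ = 0`, `j₀ = 1`, `k₀ = 2` be the vertices of a triangle of the two
geodesic embeddings `φ` (vertex positions `p`) and `φ'` (vertex positions `q`),
both satisfying the uniformly nondegenerate condition with constant `ε`, with
conformal factor `u` (`dist (q a) (q b) = e^{(u a + u b)/2} dist (p a) (p b)`).
If the edge `i₀j₀` satisfies `l'_{i₀j₀} ≥ (1 − |z'_{i₀}|²) sin ε`, `u_{i₀}` is
minimal (in particular `u_{i₀} ≤ u_{j₀}`), `|z_{i₀}| ≤ 1/2`, `l_{i₀j₀} ≤ 2r`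
and `r = sin³ε/4`, then `e^{u^h_{i₀}} ≥ 1`, where
`u^h_{i₀} = u_{i₀} + log((1 − |z_{i₀}|²)/(1 − |z'_{i₀}|²))`. -/
theorem stmt15 (ε r : ℝ) (hε : ε ∈ Set.Ioo 0 (π / 2))
    (hr : r = Real.sin ε ^ 3 / 4)
    (p q : Fin 3 → ℂ) (u : Fin 3 → ℝ)
    (hp : ∀ a b c : Fin 3, a ≠ b → b ≠ c → a ≠ c → ε ≤ ∠ (p a) (p b) (p c))
    (hq : ∀ a b c : Fin 3, a ≠ b → b ≠ c → a ≠ c → ε ≤ ∠ (q a) (q b) (q c))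
    (hconf : ∀ a b : Fin 3, a ≠ b →
      dist (q a) (q b) = Real.exp ((u a + u b) / 2) * dist (p a) (p b))
    (hq0 : ‖q 0‖ < 1)
    (hedge : (1 - ‖q 0‖ ^ 2) * Real.sin ε ≤ dist (q 0) (q 1))
    (hmin : u 0 ≤ u 1)
    (hp0 : ‖p 0‖ ≤ 1 / 2)
    (hl : dist (p 0) (p 1) ≤ 2 * r) :
    1 ≤ Real.exp (u 0 +
      Real.log ((1 - ‖p 0‖ ^ 2) / (1 - ‖q 0‖ ^ 2))) := by
  obtain ⟨hε0, hεπ⟩ := hε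
  have hs : 0 < Real.sin ε := Real.sin_pos_of_pos_of_lt_pi hε0
    (hεπ.trans_le (by linarith [Real.pi_pos]))
  -- positivity of the conformal quantities
  have hY : 0 < 1 - ‖q 0‖ ^ 2 := by
    have := norm_nonneg (q 0); nlinarith
  have hX : (3:ℝ)/4 ≤ 1 - ‖p 0‖ ^ 2 := by
    have := norm_nonneg (p 0); nlinarith
  have hq01 : 0 < dist (q 0) (q 1) :=
    lt_of_lt_of_le (by positivity) hedge
  have hp01 : 0 < dist (p 0) (p 1) := by
    have h := hconf 0 1 (by decide)
    nlinarith [Real.exp_pos ((u 0 + u 1) / 2), dist_nonneg (x := p 0) (y := p 1)]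
  -- distinctness of the vertices
  have hp01' : p 0 ≠ p 1 := dist_pos.1 hp01
  have hp02' : p 0 ≠ p 2 := by
    intro h
    have := hp 0 1 2 (by decide) (by decide) (by decide)
    rw [← h, angle_comm, angle_self_of_ne hp01'] at this
    linarith
  have hp12' : p 1 ≠ p 2 := by
    intro h
    have := hp 1 0 2 (by decide) (by decide) (by decide)
    rw [← h, angle_self_of_ne (Ne.symm hp01')] at this
    linarith
  have hq01' : q 0 ≠ q 1 := dist_pos.1 hq01
  have hq02' : q 0 ≠ q 2 := by
    intro h
    have := hq 0 1 2 (by decide) (by decide) (by decide)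
    rw [← h, angle_comm, angle_self_of_ne hq01'] at this
    linarith
  have hq12' : q 1 ≠ q 2 := by
    intro h
    have := hq 1 0 2 (by decide) (by decide) (by decide)
    rw [← h, angle_self_of_ne (Ne.symm hq01')] at this
    linarith
  -- side-ratio bounds from nondegeneracy
  -- in q: dist q0 q2 ≥ sin ε * dist q1 q2  (A = q0, B = q1, C = q2)
  have hqr : Real.sin ε * dist (q 1) (q 2) ≤ dist (q 0) (q 2) :=
    sin_mul_dist_le ε hε0 (q 0) (q 1) (q 2) hq01' hq02'
      (hq 1 0 2 (by decide) (by decide) (by decide))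
      (hq 0 1 2 (by decide) (by decide) (by decide))
      (hq 1 2 0 (by decide) (by decide) (by decide))
  -- in p: dist p1 p2 ≥ sin ε * dist p0 p2  (A = p1, B = p0, C = p2)
  have hpr : Real.sin ε * dist (p 0) (p 2) ≤ dist (p 1) (p 2) :=
    sin_mul_dist_le ε hε0 (p 1) (p 0) (p 2) (Ne.symm hp01') hp12'
      (hp 0 1 2 (by decide) (by decide) (by decide))
      (hp 1 0 2 (by decide) (by decide) (by decide))
      (hp 0 2 1 (by decide) (by decide) (by decide))
  -- conformal relations
  set e01 := Real.exp ((u 0 + u 1) / 2) with he01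
  set e02 := Real.exp ((u 0 + u 2) / 2) with he02
  set e12 := Real.exp ((u 1 + u 2) / 2) with he12
  have hc01 : dist (q 0) (q 1) = e01 * dist (p 0) (p 1) := hconf 0 1 (by decide)
  have hc02 : dist (q 0) (q 2) = e02 * dist (p 0) (p 2) := hconf 0 2 (by decide)
  have hc12 : dist (q 1) (q 2) = e12 * dist (p 1) (p 2) := hconf 1 2 (by decide)
  have hp02 : 0 < dist (p 0) (p 2) := dist_pos.2 hp02'
  have he : Real.exp (u 0) * e12 = e01 * e02 := by
    rw [he01, he02, he12, ← Real.exp_add, ← Real.exp_add]; ring_nf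
  -- s² e12 ≤ e02
  have hkey : Real.sin ε ^ 2 * e12 ≤ e02 := by
    have h1 : Real.sin ε * (e12 * (Real.sin ε * dist (p 0) (p 2)))
        ≤ Real.sin ε * (e12 * dist (p 1) (p 2)) := by
      calc Real.sin ε * (e12 * (Real.sin ε * dist (p 0) (p 2)))
          = (Real.sin ε * e12) * (Real.sin ε * dist (p 0) (p 2)) := by ring
        _ ≤ (Real.sin ε * e12) * dist (p 1) (p 2) := by
            exact mul_le_mul_of_nonneg_left hpr (mul_nonneg hs.le (Real.exp_pos _).le)
        _ = Real.sin ε * (e12 * dist (p 1) (p 2)) := by ring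
    have h2 : Real.sin ε * (e12 * dist (p 1) (p 2)) ≤ e02 * dist (p 0) (p 2) := by
      rw [← hc12, ← hc02]; exact hqr
    have h3 : Real.sin ε ^ 2 * e12 * dist (p 0) (p 2) ≤ e02 * dist (p 0) (p 2) := by
      calc Real.sin ε ^ 2 * e12 * dist (p 0) (p 2)
          = Real.sin ε * (e12 * (Real.sin ε * dist (p 0) (p 2))) := by ring
        _ ≤ e02 * dist (p 0) (p 2) := h1.trans h2
    exact le_of_mul_le_mul_right h3 hp02
  -- exp u0 ≥ 2 Y
  have he01b : (1 - ‖q 0‖ ^ 2) * Real.sin ε ≤ e01 * dist (p 0) (p 1) := by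
    rw [← hc01]; exact hedge
  have hexp0 : 2 * (1 - ‖q 0‖ ^ 2) ≤ Real.exp (u 0) := by
    have he12p : 0 < e12 := Real.exp_pos _
    have h4 : Real.exp (u 0) * e12 = e01 * e02 := he
    -- exp u0 * e12 = e01*e02 ≥ e01 * s² * e12
    have h5 : e01 * (Real.sin ε ^ 2 * e12) ≤ e01 * e02 :=
      mul_le_mul_of_nonneg_left hkey (Real.exp_pos _).le
    have h6 : e01 * Real.sin ε ^ 2 ≤ Real.exp (u 0) := by
      have : e01 * Real.sin ε ^ 2 * e12 ≤ Real.exp (u 0) * e12 := by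
        rw [h4]; calc e01 * Real.sin ε ^ 2 * e12 = e01 * (Real.sin ε ^ 2 * e12) := by ring
          _ ≤ e01 * e02 := h5
      exact le_of_mul_le_mul_right this he12p
    -- e01 ≥ Y s / d1, d1 ≤ s³/2
    have hd1 : dist (p 0) (p 1) ≤ Real.sin ε ^ 3 / 2 := by rw [hr] at hl; linarith
    have h7 : (1 - ‖q 0‖ ^ 2) * Real.sin ε ≤ e01 * (Real.sin ε ^ 3 / 2) := by
      calc (1 - ‖q 0‖ ^ 2) * Real.sin ε ≤ e01 * dist (p 0) (p 1) := he01b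
        _ ≤ e01 * (Real.sin ε ^ 3 / 2) :=
            mul_le_mul_of_nonneg_left hd1 (Real.exp_pos _).le
    -- so 2Y ≤ e01 s²  ≤ exp u0
    have h8 : 2 * (1 - ‖q 0‖ ^ 2) ≤ e01 * Real.sin ε ^ 2 := by
      have hs' : 0 < Real.sin ε := hs
      nlinarith [h7]
    linarith
  -- conclude
  rw [Real.exp_add, Real.exp_log (div_pos (by linarith) hY)]
  have h9 : (1 - ‖q 0‖ ^ 2)
      ≤ Real.exp (u 0) * (1 - ‖p 0‖ ^ 2) := by
    nlinarith [Real.exp_pos (u 0)]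
  calc (1:ℝ) ≤ (Real.exp (u 0) * (1 - ‖p 0‖ ^ 2))
        / (1 - ‖q 0‖ ^ 2) := (one_le_div hY).2 h9
    _ = Real.exp (u 0) * ((1 - ‖p 0‖ ^ 2) / (1 - ‖q 0‖ ^ 2)) := by
        ring
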